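/- Let γ > 1, K > 0, ξ ∈ ℝ, T ∈ (0,∞], and let a : [0,T) → ℝ be twice continuously differentiable with a(t) > 0 for all t, b : [0,T) → ℝ twice continuously differentiable, and W : [0,T) → ℝ continuously differentiable, satisfying for all t ∈ [0,T): (i) a''(t) = ξ / a(t)^γ; (ii) b''(t) + (1+γ)(a'(t)/a(t)) b'(t) + [2ξ/a(t)^{γ+1} + (γ−1) a'(t)²/a(t)²] b(t) = 0; (iii) W'(t) + (γ−1) W(t) a'(t)/a(t) − ((γ−1)/(Kγ)) [b'(t) + b(t) a'(t)/a(t)] b(t) = 0. Define R(r,t) = W(t) − ((γ−1)/(Kγ))[b'(t) + b(t)a'(t)/a(t)] r − ((γ−1)ξ/(2Kγ a(t)^{γ+1})) r², V(r,t) = (a'(t)/a(t)) r + b(t), and ρ(r,t) = R(r,t)^{1/(γ−1)}. Then at every (r,t) with r > 0 and R(r,t) > 0, the pair (ρ, V) satisfies the 1-dimensional radially symmetric compressible Euler system: ρ_t + V ρ_r + ρ V_r = 0 and ρ(V_t + V V_r) + ∂_r(K ρ^γ) = 0. -/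

import Mathlib

open Real Set Filter Topology
open scoped ENNReal

set_option maxHeartbeats 2000000 in
/-- The constructed perturbational solutions also solve the 1-dimensional
compressible Euler equations in radial symmetry: with `V(r,t) = (a'(t)/a(t)) r + b(t)`
and `ρ = R^{1/(γ-1)}`, at every `(r,t)` with `r > 0` and `R(r,t) > 0` we have
`ρ_t + V ρ_r + ρ V_r = 0` and `ρ(V_t + V V_r) + ∂_r(K ρ^γ) = 0`. -/
theorem perturbational_solutions_euler_radial
    (γ K ξ : ℝ) (hγ : 1 < γ) (hK : 0 < K)
    (T : ℝ≥0∞) (hT : 0 < T)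
    (D : Set ℝ) (hD : D = {t : ℝ | 0 ≤ t ∧ ENNReal.ofReal t < T})
    (a a' a'' b b' b'' W W' : ℝ → ℝ)
    (ha : ∀ t ∈ D, HasDerivAt a (a' t) t)
    (ha' : ∀ t ∈ D, HasDerivAt a' (a'' t) t)
    (ha''c : ContinuousOn a'' D)
    (hb : ∀ t ∈ D, HasDerivAt b (b' t) t)
    (hb' : ∀ t ∈ D, HasDerivAt b' (b'' t) t)
    (hb''c : ContinuousOn b'' D)
    (hW : ∀ t ∈ D, HasDerivAt W (W' t) t)
    (hW'c : ContinuousOn W' D)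
    (hapos : ∀ t ∈ D, 0 < a t)
    (hEmden : ∀ t ∈ D, a'' t = ξ / a t ^ γ)
    (hbODE : ∀ t ∈ D, b'' t + (1 + γ) * (a' t / a t) * b' t
        + (2 * ξ / a t ^ (γ + 1) + (γ - 1) * (a' t) ^ 2 / (a t) ^ 2) * b t = 0)
    (hWODE : ∀ t ∈ D, W' t + (γ - 1) * W t * (a' t / a t)
        - ((γ - 1) / (K * γ)) * (b' t + b t * (a' t / a t)) * b t = 0)
    (R V ρ : ℝ → ℝ → ℝ)
    (hR : R = fun r t => W t - ((γ - 1) / (K * γ)) * (b' t + b t * (a' t / a t)) * r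
        - ((γ - 1) * ξ / (2 * K * γ * a t ^ (γ + 1))) * r ^ 2)
    (hV : V = fun r t => (a' t / a t) * r + b t)
    (hρ : ρ = fun r t => R r t ^ ((1 : ℝ) / (γ - 1)))
    (r t : ℝ) (hr : 0 < r) (ht : t ∈ D) (hRpos : 0 < R r t) :
    deriv (fun τ => ρ r τ) t + V r t * deriv (fun s => ρ s t) r
      + ρ r t * deriv (fun s => V s t) r = 0 ∧
    ρ r t * (deriv (fun τ => V r τ) t + V r t * deriv (fun s => V s t) r)
      + deriv (fun s => K * ρ s t ^ γ) r = 0 := by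
  have hγ0 : γ - 1 ≠ 0 := by linarith
  have hγpos : (0:ℝ) < γ := by linarith
  have hA : 0 < a t := hapos t ht
  have hA0 : a t ≠ 0 := ne_of_gt hA
  have hPpos : 0 < a t ^ γ := Real.rpow_pos_of_pos hA γ
  have hP0 : a t ^ γ ≠ 0 := ne_of_gt hPpos
  have hP2 : a t ^ (γ + 1) = a t ^ γ * a t := Real.rpow_add_one hA0 γ
  have hat := ha t ht
  have hat' := ha' t ht
  have hbt := hb t ht
  have hbt' := hb' t ht
  have hWt := hW t ht
  have hEm := hEmden t ht
  have hbO := hbODE t ht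
  have hWO := hWODE t ht
  subst hρ hV hR
  beta_reduce at hRpos ⊢
  set m : ℝ := 1 / (γ - 1) with hmdef
  set C : ℝ := (γ - 1) / (K * γ) * (b' t + b t * (a' t / a t)) with hCdef
  set Dd : ℝ := (γ - 1) * ξ / (2 * K * γ * a t ^ (γ + 1)) with hDdef
  set Q : ℝ := W t - C * r - Dd * r ^ 2 with hQdef
  have hm : m * (γ - 1) = 1 := by rw [hmdef]; field_simp
  have hQ0 : Q ≠ 0 := ne_of_gt hRpos
  -- cleared ODEs
  have hb2 : b'' t = -((1 + γ) * (a' t / a t) * b' t)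
      - (2 * ξ / (a t ^ γ * a t) + (γ - 1) * (a' t) ^ 2 / (a t) ^ 2) * b t := by
    rw [hP2] at hbO; linarith
  have hW2 : W' t = -((γ - 1) * W t * (a' t / a t)) + C * b t := by linarith
  -- spatial derivatives
  have hRs : HasDerivAt (fun s => W t - C * s - Dd * s ^ 2) (-C - 2 * Dd * r) r := by
    have h := ((hasDerivAt_const r (W t)).sub ((hasDerivAt_id r).const_mul C)).sub
      ((hasDerivAt_pow 2 r).const_mul Dd)
    refine (h.congr_deriv ?_)
    push_cast; ring
  have hVs : HasDerivAt (fun s => a' t / a t * s + b t) (a' t / a t) r := by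
    have h := ((hasDerivAt_id r).const_mul (a' t / a t)).add_const (b t)
    refine (h.congr_deriv ?_); ring
  have hρs : HasDerivAt (fun s => (W t - C * s - Dd * s ^ 2) ^ m)
      ((-C - 2 * Dd * r) * m * Q ^ (m - 1)) r := hRs.rpow_const (Or.inl hQ0)
  have hρspow : HasDerivAt (fun s => ((W t - C * s - Dd * s ^ 2) ^ m) ^ γ)
      (((-C - 2 * Dd * r) * m * Q ^ (m - 1)) * γ * (Q ^ m) ^ (γ - 1)) r :=
    hρs.rpow_const (Or.inl (ne_of_gt (Real.rpow_pos_of_pos hRpos m)))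
  have hQmg : (Q ^ m) ^ (γ - 1) = Q := by
    rw [← Real.rpow_mul (le_of_lt hRpos), hm, Real.rpow_one]
  have hprs : HasDerivAt (fun s => K * ((W t - C * s - Dd * s ^ 2) ^ m) ^ γ)
      (K * ((((-C - 2 * Dd * r) * m * Q ^ (m - 1))) * γ * Q)) r := by
    have h := hρspow.const_mul K
    rw [hQmg] at h
    exact h
  -- time derivatives
  have hgd : HasDerivAt (fun τ => a' τ / a τ) ((a'' t * a t - (a' t) ^ 2) / (a t) ^ 2) t := by
    have h := hat'.div hat hA0
    refine (h.congr_deriv ?_); ring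
  have hct : HasDerivAt (fun τ => (γ - 1) / (K * γ) * (b' τ + b τ * (a' τ / a τ)))
      ((γ - 1) / (K * γ) * (b'' t + (b' t * (a' t / a t)
        + b t * ((a'' t * a t - (a' t) ^ 2) / (a t) ^ 2)))) t :=
    (hbt'.add (hbt.mul hgd)).const_mul _
  have hpw : HasDerivAt (fun τ => a τ ^ (γ + 1)) ((γ + 1) * (a t ^ γ * a' t)) t := by
    have h := hat.rpow_const (p := γ + 1) (Or.inl hA0)
    rw [show γ + 1 - 1 = γ by ring] at h
    refine (h.congr_deriv ?_); ring
  have hden0 : 2 * K * γ * a t ^ (γ + 1) ≠ 0 := by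
    have h1 : 0 < a t ^ (γ + 1) := Real.rpow_pos_of_pos hA (γ + 1)
    have : 0 < 2 * K * γ * a t ^ (γ + 1) := by
      apply mul_pos (mul_pos (mul_pos two_pos hK) hγpos) h1
    exact ne_of_gt this
  have hdt : HasDerivAt (fun τ => (γ - 1) * ξ / (2 * K * γ * a τ ^ (γ + 1)))
      (-((γ - 1) * ξ * (γ + 1) * a' t) / (2 * K * γ * (a t ^ γ * a t ^ 2))) t := by
    have h := (hasDerivAt_const t ((γ - 1) * ξ)).div (hpw.const_mul (2 * K * γ)) hden0
    refine (h.congr_deriv ?_)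
    rw [hP2]
    field_simp
    ring
  have hRt : HasDerivAt (fun τ => W τ - (γ - 1) / (K * γ) * (b' τ + b τ * (a' τ / a τ)) * r
      - (γ - 1) * ξ / (2 * K * γ * a τ ^ (γ + 1)) * r ^ 2)
      (W' t - ((γ - 1) / (K * γ) * (b'' t + (b' t * (a' t / a t)
        + b t * ((a'' t * a t - (a' t) ^ 2) / (a t) ^ 2)))) * r
      - (-((γ - 1) * ξ * (γ + 1) * a' t) / (2 * K * γ * (a t ^ γ * a t ^ 2))) * r ^ 2) t :=
    (hWt.sub (hct.mul_const r)).sub (hdt.mul_const (r ^ 2))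
  have hρt : HasDerivAt (fun τ => (W τ - (γ - 1) / (K * γ) * (b' τ + b τ * (a' τ / a τ)) * r
      - (γ - 1) * ξ / (2 * K * γ * a τ ^ (γ + 1)) * r ^ 2) ^ m)
      ((W' t - ((γ - 1) / (K * γ) * (b'' t + (b' t * (a' t / a t)
        + b t * ((a'' t * a t - (a' t) ^ 2) / (a t) ^ 2)))) * r
      - (-((γ - 1) * ξ * (γ + 1) * a' t) / (2 * K * γ * (a t ^ γ * a t ^ 2))) * r ^ 2)
        * m * Q ^ (m - 1)) t :=
    hRt.rpow_const (Or.inl hQ0)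
  have hVt : HasDerivAt (fun τ => a' τ / a τ * r + b τ)
      (((a'' t * a t - (a' t) ^ 2) / (a t) ^ 2) * r + b' t) t := (hgd.mul_const r).add hbt
  -- key algebraic identities
  have hE1 : (W' t - ((γ - 1) / (K * γ) * (b'' t + (b' t * (a' t / a t)
        + b t * ((a'' t * a t - (a' t) ^ 2) / (a t) ^ 2)))) * r
      - (-((γ - 1) * ξ * (γ + 1) * a' t) / (2 * K * γ * (a t ^ γ * a t ^ 2))) * r ^ 2)
      + (a' t / a t * r + b t) * (-C - 2 * Dd * r) + (γ - 1) * Q * (a' t / a t) = 0 := by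
    rw [hQdef, hW2, hb2, hEm, hCdef, hDdef, hP2]
    field_simp
    ring
  have hE2 : (γ - 1) * ((((a'' t * a t - (a' t) ^ 2) / (a t) ^ 2) * r + b' t)
      + (a' t / a t * r + b t) * (a' t / a t)) + K * γ * (-C - 2 * Dd * r) = 0 := by
    rw [hEm, hCdef, hDdef, hP2]
    field_simp
    ring
  have hQQ : Q ^ m = Q ^ (m - 1) * Q := by
    nth_rewrite 1 [show m = m - 1 + 1 by ring]
    rw [Real.rpow_add_one hQ0]
  constructor
  · rw [hρt.deriv, hρs.deriv, hVs.deriv, hQQ]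
    linear_combination m * Q ^ (m - 1) * hE1 - Q ^ (m - 1) * Q * (a' t / a t) * hm
  · rw [hVt.deriv, hVs.deriv, hprs.deriv, hQQ]
    linear_combination m * Q ^ (m - 1) * Q * hE2
      - Q ^ (m - 1) * Q * ((((a'' t * a t - (a' t) ^ 2) / (a t) ^ 2) * r + b' t)
        + (a' t / a t * r + b t) * (a' t / a t)) * hm
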